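/- Let Z be a symmetric n×n integer matrix such that every diagonal entry of Z is ≡ 0 mod 4 and every off-diagonal entry is ≡ 0 or 2 mod 4. Then there exists an integer matrix P with det(P) = ±1 such that P^T Z P modulo 4 equals the block diagonal matrix diag(t·[[0,2],[2,0]], m·[0]) for some non-negative integers t, m with 2t + m = n. -/

import Mathlib

/-- Entry `(i,j)` of the block diagonal matrix
`diag(r·[[2,1],[1,2]], s·[[0,1],[1,0]], t·[[0,2],[2,0]], p·[2], m·[0])`
(the `m` trailing zero rows/columns are implicit: the entry is `0` there). -/
def nfEntry (r s t p : ℕ) (i j : ℕ) : ℤ :=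
  if i < 2*r ∧ j < 2*r then (if i = j then 2 else if i / 2 = j / 2 then 1 else 0)
  else if 2*r ≤ i ∧ i < 2*r+2*s ∧ 2*r ≤ j ∧ j < 2*r+2*s then
    (if i ≠ j ∧ i / 2 = j / 2 then 1 else 0)
  else if 2*r+2*s ≤ i ∧ i < 2*r+2*s+2*t ∧ 2*r+2*s ≤ j ∧ j < 2*r+2*s+2*t then
    (if i ≠ j ∧ i / 2 = j / 2 then 2 else 0)
  else if 2*r+2*s+2*t ≤ i ∧ i < 2*r+2*s+2*t+p ∧ i = j then 2
  else 0

namespace Stmt2Aux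
open Matrix

lemma nf_zero (i j : ℕ) : nfEntry 0 0 0 0 i j = 0 := by
  unfold nfEntry; split_ifs <;> omega

lemma nf_block (t i j : ℕ) (hi : i < 2) (hj : j < 2) :
    nfEntry 0 0 (t+1) 0 i j = if i = j then 0 else 2 := by
  unfold nfEntry; split_ifs <;> omega

lemma nf_cross (t i j : ℕ) (hi : i < 2) (hj : 2 ≤ j) :
    nfEntry 0 0 (t+1) 0 i j = 0 := by unfold nfEntry; split_ifs <;> omega

lemma nf_cross' (t i j : ℕ) (hi : 2 ≤ i) (hj : j < 2) :
    nfEntry 0 0 (t+1) 0 i j = 0 := by unfold nfEntry; split_ifs <;> omega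

lemma nf_shift (t k l : ℕ) :
    nfEntry 0 0 (t+1) 0 (2+k) (2+l) = nfEntry 0 0 t 0 k l := by
  unfold nfEntry; split_ifs <;> omega

def Concl (n : ℕ) (Z : Matrix (Fin n) (Fin n) ℤ) : Prop :=
  ∃ P : Matrix (Fin n) (Fin n) ℤ, (P.det = 1 ∨ P.det = -1) ∧
    ∃ t m : ℕ, 2*t + m = n ∧
      ∀ i j : Fin n,
        (((Pᵀ * Z * P) i j : ℤ) : ZMod 4) = ((nfEntry 0 0 t 0 (i : ℕ) (j : ℕ) : ℤ) : ZMod 4)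

lemma cong_step {n : ℕ} {Z W : Matrix (Fin n) (Fin n) ℤ} (P₀ : Matrix (Fin n) (Fin n) ℤ)
    (hdet : P₀.det = 1 ∨ P₀.det = -1) (hW : P₀ᵀ * Z * P₀ = W) (h : Concl n W) : Concl n Z := by
  obtain ⟨P, hP, t, m, htm, hmod⟩ := h
  refine ⟨P₀ * P, ?_, t, m, htm, fun i j => ?_⟩
  · rcases hdet with h1|h1 <;> rcases hP with h2|h2 <;> simp [Matrix.det_mul, h1, h2]
  · have e : (P₀*P)ᵀ * Z * (P₀*P) = Pᵀ * W * P := by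
      rw [Matrix.transpose_mul, ← hW]; simp only [Matrix.mul_assoc]
    rw [e]; exact hmod i j

lemma perm_cong {n : ℕ} (Z : Matrix (Fin n) (Fin n) ℤ) (σ : Equiv.Perm (Fin n)) :
    ∃ P : Matrix (Fin n) (Fin n) ℤ, (P.det = 1 ∨ P.det = -1) ∧
      Pᵀ * Z * P = Z.submatrix σ σ := by
  refine ⟨(σ⁻¹).permMatrix ℤ, ?_, ?_⟩
  · rw [Matrix.det_permutation]
    rcases Int.units_eq_one_or (Equiv.Perm.sign σ⁻¹) with h|h <;> simp [h]
  · ext a b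
    simp only [Matrix.mul_apply, Matrix.transpose_apply, Matrix.submatrix_apply,
      Equiv.Perm.permMatrix, PEquiv.toMatrix_toPEquiv_apply, Matrix.one_apply]
    simp [Finset.mul_sum, ite_mul, mul_ite, Finset.sum_ite_eq, Finset.sum_ite_eq',
      Equiv.Perm.inv_eq_iff_eq, Pi.single_apply, Equiv.eq_symm_apply]

section core
variable {m : ℕ} (Z : Matrix (Fin (m+2)) (Fin (m+2)) ℤ)

noncomputable def uu (b : Fin (m+2)) : ℤ :=
  if 2 ≤ (b : ℕ) ∧ ((Z 1 b : ℤ) : ZMod 4) = 2 then 1 else 0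

noncomputable def vv (b : Fin (m+2)) : ℤ :=
  if 2 ≤ (b : ℕ) ∧ ((Z 0 b : ℤ) : ZMod 4) = 2 then 1 else 0

noncomputable def NN : Matrix (Fin (m+2)) (Fin (m+2)) ℤ :=
  Matrix.of fun a b => if a = 0 then uu Z b else if a = 1 then vv Z b else 0

lemma succ_succ_ne_zero (k : Fin m) : (k.succ.succ : Fin (m+2)) ≠ 0 := Fin.succ_ne_zero _

lemma succ_succ_ne_one (k : Fin m) : (k.succ.succ : Fin (m+2)) ≠ 1 := by
  simp [Fin.ext_iff, Fin.val_succ]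

lemma mulNN (M : Matrix (Fin (m+2)) (Fin (m+2)) ℤ) (a b : Fin (m+2)) :
    (M * NN Z) a b = M a 0 * uu Z b + M a 1 * vv Z b := by
  rw [Matrix.mul_apply, Fin.sum_univ_succ, Fin.sum_univ_succ]
  simp [NN, succ_succ_ne_zero, succ_succ_ne_one, Fin.succ_zero_eq_one,
    show (1 : Fin (m+2)) ≠ 0 by simp [Fin.ext_iff]]

lemma NNTmul (M : Matrix (Fin (m+2)) (Fin (m+2)) ℤ) (a b : Fin (m+2)) :
    ((NN Z)ᵀ * M) a b = uu Z a * M 0 b + vv Z a * M 1 b := by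
  rw [Matrix.mul_apply, Fin.sum_univ_succ, Fin.sum_univ_succ]
  simp [NN, succ_succ_ne_zero, succ_succ_ne_one, Fin.succ_zero_eq_one,
    show (1 : Fin (m+2)) ≠ 0 by simp [Fin.ext_iff]]

noncomputable def PP : Matrix (Fin (m+2)) (Fin (m+2)) ℤ := 1 + NN Z

lemma det_PP : (PP Z).det = 1 := by
  have ht : (PP Z).BlockTriangular id := by
    intro i j hij
    have hij' : (j : ℕ) < (i : ℕ) := hij
    have hne : i ≠ j := by intro h; subst h; exact absurd hij' (lt_irrefl _)
    simp only [PP, Matrix.add_apply, Matrix.one_apply, if_neg hne, NN, Matrix.of_apply]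
    split_ifs with h0 h1
    · subst h0; simp at hij'
    · subst h1; have : (j:ℕ) < 1 := hij'
      simp [vv]; intro h; omega
    · simp
  rw [Matrix.det_of_upperTriangular ht]
  apply Finset.prod_eq_one
  intro i _
  simp only [PP, Matrix.add_apply, Matrix.one_apply_eq, NN, Matrix.of_apply]
  split_ifs with h0 h1
  · subst h0; simp [uu]
  · subst h1; simp [vv]
  · simp

noncomputable def Went (a b : Fin (m+2)) : ℤ :=
  Z a b + (uu Z a * Z 0 b + vv Z a * Z 1 b) + (Z a 0 * uu Z b + Z a 1 * vv Z b) +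
    (uu Z a * (Z 0 0 * uu Z b + Z 0 1 * vv Z b) +
      vv Z a * (Z 1 0 * uu Z b + Z 1 1 * vv Z b))

lemma WW_form (a b : Fin (m+2)) :
    ((PP Z)ᵀ * Z * PP Z) a b = Went Z a b := by
  have e : (PP Z)ᵀ * Z * PP Z = Z + (NN Z)ᵀ * Z + (Z * NN Z + (NN Z)ᵀ * (Z * NN Z)) := by
    simp only [PP, Matrix.transpose_add, Matrix.transpose_one]
    noncomm_ring
  rw [e]
  simp only [Matrix.add_apply, NNTmul, mulNN, Went]
  ring

lemma uu_zero : uu Z 0 = 0 := by simp [uu]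
lemma uu_one : uu Z 1 = 0 := by simp [uu]
lemma vv_zero : vv Z 0 = 0 := by simp [vv]
lemma vv_one : vv Z 1 = 0 := by simp [vv]

variable (hsym : Z.IsSymm)
  (hdiag : ∀ i, ((Z i i : ℤ) : ZMod 4) = 0)
  (hoff : ∀ i j, i ≠ j → ((Z i j : ℤ) : ZMod 4) = 0 ∨ ((Z i j : ℤ) : ZMod 4) = 2)
  (hpiv : ((Z 0 1 : ℤ) : ZMod 4) = 2)

set_option linter.unusedSectionVars false

include hdiag in
lemma W_00 : ((Went Z 0 0 : ℤ) : ZMod 4) = 0 := by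
  simp [Went, uu_zero, vv_zero]
  simp [hdiag 0]

include hpiv in
lemma W_01 : ((Went Z 0 1 : ℤ) : ZMod 4) = 2 := by
  simp [Went, uu_zero, vv_zero, uu_one, vv_one]
  simp [hpiv]

include hsym hpiv in
lemma W_10 : ((Went Z 1 0 : ℤ) : ZMod 4) = 2 := by
  simp [Went, uu_zero, vv_zero, uu_one, vv_one]
  rw [hsym.apply 0 1]
  simp [hpiv]

include hdiag in
lemma W_11 : ((Went Z 1 1 : ℤ) : ZMod 4) = 0 := by
  simp [Went, uu_one, vv_one]
  simp [hdiag 1]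

include hdiag hoff hpiv in
lemma W_c0 (b : Fin (m+2)) (hb : 2 ≤ (b : ℕ)) : ((Went Z 0 b : ℤ) : ZMod 4) = 0 := by
  have hb0 : (0 : Fin (m+2)) ≠ b := by simp [Fin.ext_iff]; omega
  simp only [Went, uu_zero, vv_zero, zero_mul, add_zero, zero_add]
  push_cast
  rw [hdiag 0, hpiv]
  simp only [vv, hb]
  rcases hoff 0 b hb0 with h|h <;>
    simp [h, apply_ite (fun x : ℤ => (x : ZMod 4))] <;> decide

include hdiag hoff hsym hpiv in
lemma W_c1 (b : Fin (m+2)) (hb : 2 ≤ (b : ℕ)) : ((Went Z 1 b : ℤ) : ZMod 4) = 0 := by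
  have hb1 : (1 : Fin (m+2)) ≠ b := by simp [Fin.ext_iff]; omega
  simp only [Went, uu_one, vv_one, zero_mul, add_zero, zero_add]
  push_cast
  rw [hdiag 1, hsym.apply 0 1, hpiv]
  simp only [uu, hb]
  rcases hoff 1 b hb1 with h|h <;>
    simp [h, apply_ite (fun x : ℤ => (x : ZMod 4))] <;> decide

include hdiag hoff hsym hpiv in
lemma W_diag (a : Fin (m+2)) (ha : 2 ≤ (a : ℕ)) : ((Went Z a a : ℤ) : ZMod 4) = 0 := by
  have ha0 : (0 : Fin (m+2)) ≠ a := by simp [Fin.ext_iff]; omega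
  have ha1 : (1 : Fin (m+2)) ≠ a := by simp [Fin.ext_iff]; omega
  have e0 : 2 * ((Z 0 a : ℤ) : ZMod 4) = 0 := by
    rcases hoff 0 a ha0 with h|h <;> rw [h] <;> decide
  have e1 : 2 * ((Z 1 a : ℤ) : ZMod 4) = 0 := by
    rcases hoff 1 a ha1 with h|h <;> rw [h] <;> decide
  simp only [Went]
  push_cast
  rw [hdiag a, hdiag 0, hdiag 1, hsym.apply 0 1, hpiv, ← hsym.apply a 0, ← hsym.apply a 1]
  have h4 : (4 : ZMod 4) = 0 := by decide
  linear_combination ((uu Z a : ℤ) : ZMod 4) * e0 + ((vv Z a : ℤ) : ZMod 4) * e1 +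
    (((uu Z a : ℤ) : ZMod 4) * ((vv Z a : ℤ) : ZMod 4)) * h4

include hdiag hoff hsym hpiv in
lemma W_off (a b : Fin (m+2)) (ha : 2 ≤ (a : ℕ)) (hb : 2 ≤ (b : ℕ)) (hab : a ≠ b) :
    ((Went Z a b : ℤ) : ZMod 4) = 0 ∨ ((Went Z a b : ℤ) : ZMod 4) = 2 := by
  have heven : ∀ x : ZMod 4, 2 * x = 0 → x = 0 ∨ x = 2 := by decide
  apply heven
  have ha0 : (0 : Fin (m+2)) ≠ a := by simp [Fin.ext_iff]; omega
  have ha1 : (1 : Fin (m+2)) ≠ a := by simp [Fin.ext_iff]; omega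
  have hb0 : (0 : Fin (m+2)) ≠ b := by simp [Fin.ext_iff]; omega
  have hb1 : (1 : Fin (m+2)) ≠ b := by simp [Fin.ext_iff]; omega
  have twoz : ∀ i j : Fin (m+2), i ≠ j → 2 * ((Z i j : ℤ) : ZMod 4) = 0 := by
    intro i j h; rcases hoff i j h with h'|h' <;> rw [h'] <;> decide
  have eab := twoz a b hab
  have e0b := twoz 0 b hb0
  have e1b := twoz 1 b hb1
  have e0a := twoz 0 a ha0
  have e1a := twoz 1 a ha1
  simp only [Went]
  push_cast
  rw [hdiag 0, hdiag 1, hsym.apply 0 1, hpiv, ← hsym.apply a 0, ← hsym.apply a 1]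
  have h4 : (4 : ZMod 4) = 0 := by decide
  linear_combination eab + ((uu Z a : ℤ) : ZMod 4) * e0b + ((vv Z a : ℤ) : ZMod 4) * e1b +
    ((uu Z b : ℤ) : ZMod 4) * e0a + ((vv Z b : ℤ) : ZMod 4) * e1a +
    (((uu Z a : ℤ) : ZMod 4) * ((vv Z b : ℤ) : ZMod 4) +
      ((vv Z a : ℤ) : ZMod 4) * ((uu Z b : ℤ) : ZMod 4)) * h4

include hsym hdiag hoff hpiv in
lemma core
    (ih : ∀ D : Matrix (Fin m) (Fin m) ℤ, D.IsSymm →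
      (∀ i, ((D i i : ℤ) : ZMod 4) = 0) →
      (∀ i j, i ≠ j → ((D i j : ℤ) : ZMod 4) = 0 ∨ ((D i j : ℤ) : ZMod 4) = 2) →
      Concl m D) :
    Concl (m+2) Z := by
  classical
  set W : Matrix (Fin (m+2)) (Fin (m+2)) ℤ := (PP Z)ᵀ * Z * PP Z with hWdef
  have hWe : ∀ a b, W a b = Went Z a b := WW_form Z
  have hWsym : W.IsSymm := by
    unfold Matrix.IsSymm
    rw [hWdef, Matrix.transpose_mul, Matrix.transpose_mul, Matrix.transpose_transpose,
      hsym.eq, Matrix.mul_assoc]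
  -- the reindexing equivalence
  let e : (Fin 2 ⊕ Fin m) ≃ Fin (m+2) := finSumFinEquiv.trans (finCongr (by omega))
  have hval_l : ∀ i : Fin 2, ((e (Sum.inl i) : Fin (m+2)) : ℕ) = (i : ℕ) := by
    intro i; simp [e, finSumFinEquiv_apply_left]
  have hval_r : ∀ k : Fin m, ((e (Sum.inr k) : Fin (m+2)) : ℕ) = 2 + (k : ℕ) := by
    intro k; simp [e, finSumFinEquiv_apply_right]; omega
  -- facts about W
  have hWblock : ∀ a b : Fin (m+2), (a : ℕ) < 2 → (b : ℕ) < 2 →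
      ((W a b : ℤ) : ZMod 4) = if (a : ℕ) = (b : ℕ) then 0 else 2 := by
    intro a b ha hb
    have ha' : a = 0 ∨ a = 1 := by simp only [Fin.ext_iff, Fin.val_zero, Fin.val_one]; omega
    have hb' : b = 0 ∨ b = 1 := by simp only [Fin.ext_iff, Fin.val_zero, Fin.val_one]; omega
    rcases ha' with rfl|rfl <;> rcases hb' with rfl|rfl <;> rw [hWe] <;>
      simp [W_00 Z hdiag, W_01 Z hpiv, W_10 Z hsym hpiv, W_11 Z hdiag]
  have hWcross : ∀ a b : Fin (m+2), (a : ℕ) < 2 → 2 ≤ (b : ℕ) →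
      ((W a b : ℤ) : ZMod 4) = 0 := by
    intro a b ha hb
    have ha' : a = 0 ∨ a = 1 := by simp only [Fin.ext_iff, Fin.val_zero, Fin.val_one]; omega
    rcases ha' with rfl|rfl <;> rw [hWe]
    · exact W_c0 Z hdiag hoff hpiv b hb
    · exact W_c1 Z hsym hdiag hoff hpiv b hb
  have hWcross' : ∀ a b : Fin (m+2), 2 ≤ (a : ℕ) → (b : ℕ) < 2 →
      ((W a b : ℤ) : ZMod 4) = 0 := by
    intro a b ha hb
    rw [hWsym.apply b a]
    exact hWcross b a hb ha
  -- the lower-right block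
  set D : Matrix (Fin m) (Fin m) ℤ :=
    Matrix.of (fun k l => W (e (Sum.inr k)) (e (Sum.inr l))) with hDdef
  have hDD := ih D
    (by
      unfold Matrix.IsSymm
      ext k l
      simp only [Matrix.transpose_apply, hDdef, Matrix.of_apply]
      exact hWsym.apply _ _)
    (by
      intro k
      simp only [hDdef, Matrix.of_apply, hWe]
      exact W_diag Z hsym hdiag hoff hpiv _ (by rw [hval_r]; omega))
    (by
      intro k l hkl
      simp only [hDdef, Matrix.of_apply, hWe]
      refine W_off Z hsym hdiag hoff hpiv _ _ (by rw [hval_r]; omega) (by rw [hval_r]; omega) ?_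
      intro h
      exact hkl (Sum.inr_injective (e.injective h)))
  obtain ⟨Q, hQdet, t', m', htm', hQ⟩ := hDD
  -- the block-diagonal matrix 1 ⊕ Q transported to Fin (m+2)
  set PQ : Matrix (Fin (m+2)) (Fin (m+2)) ℤ :=
    (Matrix.fromBlocks (1 : Matrix (Fin 2) (Fin 2) ℤ) 0 0 Q).submatrix e.symm e.symm with hPQdef
  have hPQdet : PQ.det = 1 ∨ PQ.det = -1 := by
    rw [hPQdef, Matrix.det_submatrix_equiv_self, Matrix.det_fromBlocks_zero₂₁,
      Matrix.det_one, one_mul]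
    exact hQdet
  have key : PQᵀ * W * PQ =
      ((Matrix.fromBlocks (1 : Matrix (Fin 2) (Fin 2) ℤ) 0 0 Qᵀ) * (W.submatrix e e) *
        (Matrix.fromBlocks (1 : Matrix (Fin 2) (Fin 2) ℤ) 0 0 Q)).submatrix e.symm e.symm := by
    have h1 : PQᵀ = (Matrix.fromBlocks (1 : Matrix (Fin 2) (Fin 2) ℤ) 0 0 Qᵀ).submatrix
        e.symm e.symm := by
      rw [hPQdef, Matrix.transpose_submatrix, Matrix.fromBlocks_transpose]
      simp
    have h2 : W = (W.submatrix ⇑e ⇑e).submatrix ⇑e.symm ⇑e.symm := by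
      simp [Matrix.submatrix_submatrix, Equiv.self_comp_symm]
    rw [h1, hPQdef]
    conv_lhs => rw [h2]
    rw [Matrix.submatrix_mul_equiv, Matrix.submatrix_mul_equiv]
  refine cong_step (PP Z) (Or.inl (det_PP Z)) rfl ⟨PQ, hPQdet, t' + 1, m', by omega, ?_⟩
  intro a b
  rw [← hWdef, key, Matrix.submatrix_apply]
  rw [← Matrix.fromBlocks_toBlocks (W.submatrix ⇑e ⇑e), Matrix.fromBlocks_multiply,
    Matrix.fromBlocks_multiply]
  simp only [Matrix.mul_one, Matrix.one_mul, Matrix.mul_zero, Matrix.zero_mul,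
    add_zero, zero_add, Matrix.mul_assoc]
  obtain ⟨sa, rfl⟩ : ∃ s, a = e s := ⟨e.symm a, (e.apply_symm_apply a).symm⟩
  obtain ⟨sb, rfl⟩ : ∃ s, b = e s := ⟨e.symm b, (e.apply_symm_apply b).symm⟩
  rw [Equiv.symm_apply_apply, Equiv.symm_apply_apply]
  rcases sa with i|k <;> rcases sb with j|l
  · rw [Matrix.fromBlocks_apply₁₁]
    have h11 : Matrix.toBlocks₁₁ (W.submatrix ⇑e ⇑e) i j = W (e (Sum.inl i)) (e (Sum.inl j)) := rfl
    rw [h11, hWblock _ _ (by rw [hval_l]; exact i.isLt) (by rw [hval_l]; exact j.isLt),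
      hval_l, hval_l, nf_block t' _ _ i.isLt j.isLt]
    rw [apply_ite (fun x : ℤ => (x : ZMod 4))]
    norm_num
  · rw [Matrix.fromBlocks_apply₁₂]
    rw [hval_l, hval_r, nf_cross t' _ _ i.isLt (by omega)]
    push_cast [Matrix.mul_apply]
    apply Finset.sum_eq_zero
    intro k _
    have h12 : Matrix.toBlocks₁₂ (W.submatrix ⇑e ⇑e) i k = W (e (Sum.inl i)) (e (Sum.inr k)) := rfl
    rw [h12, hWcross _ _ (by rw [hval_l]; exact i.isLt) (by rw [hval_r]; omega), zero_mul]
  · rw [Matrix.fromBlocks_apply₂₁]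
    rw [hval_r, hval_l, nf_cross' t' _ _ (by omega) j.isLt]
    push_cast [Matrix.mul_apply]
    apply Finset.sum_eq_zero
    intro x _
    have h21 : Matrix.toBlocks₂₁ (W.submatrix ⇑e ⇑e) x j = W (e (Sum.inr x)) (e (Sum.inl j)) := rfl
    rw [h21, hWcross' _ _ (by rw [hval_r]; omega) (by rw [hval_l]; exact j.isLt), mul_zero]
  · rw [Matrix.fromBlocks_apply₂₂]
    have h22 : Matrix.toBlocks₂₂ (W.submatrix ⇑e ⇑e) = D := by
      ext k' l'; rfl
    rw [h22, hval_r, hval_r, nf_shift]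
    have := hQ k l
    rw [Matrix.mul_assoc] at this
    exact this

end core

lemma aux : ∀ n (Z : Matrix (Fin n) (Fin n) ℤ), Z.IsSymm →
    (∀ i, ((Z i i : ℤ) : ZMod 4) = 0) →
    (∀ i j, i ≠ j → ((Z i j : ℤ) : ZMod 4) = 0 ∨ ((Z i j : ℤ) : ZMod 4) = 2) →
    Concl n Z := by
  intro n
  induction n using Nat.strong_induction_on with
  | _ n IH =>
  intro Z hsym hdiag hoff
  by_cases hall : ∀ i j, ((Z i j : ℤ) : ZMod 4) = 0
  · refine ⟨1, Or.inl (by simp), 0, n, by omega, fun i j => ?_⟩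
    simp only [Matrix.transpose_one, Matrix.one_mul, Matrix.mul_one]
    rw [hall i j, nf_zero]
    norm_num
  · push_neg at hall
    obtain ⟨i₀, j₀, hij⟩ := hall
    have hne : i₀ ≠ j₀ := by
      intro h; subst h; exact hij (hdiag i₀)
    have hval : ((Z i₀ j₀ : ℤ) : ZMod 4) = 2 := (hoff i₀ j₀ hne).resolve_left hij
    have hn2 : 1 < n := by
      rcases Nat.lt_or_ge n 2 with h|h
      · exfalso
        interval_cases n
        · exact i₀.elim0
        · exact hne (Subsingleton.elim i₀ j₀)
      · omega
    obtain ⟨m, rfl⟩ : ∃ m, n = m + 2 := ⟨n - 2, by omega⟩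
    -- build the permutation sending 0 ↦ i₀, 1 ↦ j₀
    let τ : Equiv.Perm (Fin (m+2)) := Equiv.swap 0 i₀
    have hτj : τ j₀ ≠ 0 := by
      intro h
      apply hne
      have h2 := congrArg τ h
      rw [show τ (τ j₀) = j₀ from Equiv.swap_apply_self _ _ _] at h2
      rw [h2]
      exact (Equiv.swap_apply_left _ _).symm
    let σ : Equiv.Perm (Fin (m+2)) := (Equiv.swap 1 (τ j₀)).trans τ
    have hσ0 : σ 0 = i₀ := by
      simp only [σ, Equiv.trans_apply]
      rw [Equiv.swap_apply_of_ne_of_ne (by simp [Fin.ext_iff]) (Ne.symm hτj)]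
      exact Equiv.swap_apply_left _ _
    have hσ1 : σ 1 = j₀ := by
      simp only [σ, Equiv.trans_apply, Equiv.swap_apply_left, τ]
      exact Equiv.swap_apply_self _ _ _
    obtain ⟨Pσ, hPσdet, hPσ⟩ := perm_cong Z σ
    apply cong_step Pσ hPσdet hPσ
    set Z₁ : Matrix (Fin (m+2)) (Fin (m+2)) ℤ := Z.submatrix σ σ with hZ₁def
    have hsym1 : Z₁.IsSymm := by
      unfold Matrix.IsSymm
      ext a b
      simp only [Matrix.transpose_apply, hZ₁def, Matrix.submatrix_apply]
      exact hsym.apply _ _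
    have hdiag1 : ∀ i, ((Z₁ i i : ℤ) : ZMod 4) = 0 := fun i => hdiag _
    have hoff1 : ∀ i j, i ≠ j → ((Z₁ i j : ℤ) : ZMod 4) = 0 ∨ ((Z₁ i j : ℤ) : ZMod 4) = 2 :=
      fun i j h => hoff _ _ (fun hh => h (σ.injective hh))
    have hpiv1 : ((Z₁ 0 1 : ℤ) : ZMod 4) = 2 := by
      simp only [hZ₁def, Matrix.submatrix_apply, hσ0, hσ1]
      exact hval
    exact core Z₁ hsym1 hdiag1 hoff1 hpiv1 (fun D hs hd ho => IH m (by omega) D hs hd ho)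

end Stmt2Aux

open Matrix in
/-- Lemma 2.2: a symmetric integer matrix whose diagonal entries are ≡ 0 (mod 4)
and whose off-diagonal entries are ≡ 0 or 2 (mod 4) is congruent, mod 4, to
diag(t·[[0,2],[2,0]], m·[0]) with 2t + m = n. -/
theorem stmt_2 (n : ℕ) (Z : Matrix (Fin n) (Fin n) ℤ)
    (hsym : Z.IsSymm)
    (hdiag : ∀ i, ((Z i i : ℤ) : ZMod 4) = 0)
    (hoff : ∀ i j, i ≠ j → ((Z i j : ℤ) : ZMod 4) = 0 ∨ ((Z i j : ℤ) : ZMod 4) = 2) :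
    ∃ P : Matrix (Fin n) (Fin n) ℤ, (P.det = 1 ∨ P.det = -1) ∧
      ∃ t m : ℕ, 2*t + m = n ∧
        ∀ i j : Fin n,
          (((Pᵀ * Z * P) i j : ℤ) : ZMod 4) = ((nfEntry 0 0 t 0 (i : ℕ) (j : ℕ) : ℤ) : ZMod 4) := by
  exact Stmt2Aux.aux n Z hsym hdiag hoff
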